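/- Let A be Hermitian of rank r ≤ n with eigenvalues λ₁ ≥ ⋯ ≥ λ_r, λ_{r+1} = ⋯ = λ_n = 0, E Hermitian, and k = ‖(A^{1/2})⁺ E (A^{1/2})⁺‖₂. If the eigenvalue of A with smallest nonzero absolute value has algebraic multiplicity at least n−r+1, then there exists i ∈ {1,…,r} with λ_i + k|λ_i| ≤ λ_{n-r+i} + ‖E‖₂ and λ_i − k|λ_i| ≥ λ_i − ‖E‖₂. -/

import Mathlib

open Matrix
open scoped ComplexOrder

/-- The spectral norm (operator 2-norm) of a complex matrix. -/
noncomputable def specNorm {m n : Type*} [Fintype m] [Fintype n] [DecidableEq n]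
    (A : Matrix m n ℂ) : ℝ :=
  ‖LinearMap.toContinuousLinearMap (Matrix.toEuclideanLin A)‖

/-- `B` is the Moore–Penrose pseudoinverse of `A` (the four Penrose conditions). -/
def IsMP {m n : Type*} [Fintype m] [Fintype n]
    (A : Matrix m n ℂ) (B : Matrix n m ℂ) : Prop :=
  A * B * A = A ∧ B * A * B = B ∧ (A * B)ᴴ = A * B ∧ (B * A)ᴴ = B * A

open scoped Matrix.Norms.L2Operator

lemma specNorm_eq_l2 {m n : Type*} [Fintype m] [Fintype n] [DecidableEq n]
    (A : Matrix m n ℂ) : specNorm A = ‖A‖ := rfl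

lemma mp_unique {n : Type*} [Fintype n] {A B₁ B₂ : Matrix n n ℂ}
    (h1 : IsMP A B₁) (h2 : IsMP A B₂) : B₁ = B₂ := by
  obtain ⟨a1, b1, c1, d1⟩ := h1
  obtain ⟨a2, b2, c2, d2⟩ := h2
  have hAB : A * B₁ = A * B₂ := by
    calc A * B₁ = (A * B₁)ᴴ := c1.symm
      _ = B₁ᴴ * Aᴴ := conjTranspose_mul _ _
      _ = B₁ᴴ * (A * B₂ * A)ᴴ := by rw [a2]
      _ = B₁ᴴ * (Aᴴ * (A * B₂)ᴴ) := by rw [conjTranspose_mul (A * B₂) A]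
      _ = (B₁ᴴ * Aᴴ) * (A * B₂)ᴴ := by rw [mul_assoc]
      _ = (A * B₁)ᴴ * (A * B₂) := by rw [← conjTranspose_mul, c2]
      _ = (A * B₁) * (A * B₂) := by rw [c1]
      _ = (A * B₁ * A) * B₂ := by rw [← mul_assoc]
      _ = A * B₂ := by rw [a1]
  have hBA : B₁ * A = B₂ * A := by
    have e : Aᴴ = B₂ * A * Aᴴ := by
      conv_lhs => rw [← a2, mul_assoc]
      rw [conjTranspose_mul, d2]
    calc B₁ * A = (B₁ * A)ᴴ := d1.symm
      _ = Aᴴ * B₁ᴴ := conjTranspose_mul _ _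
      _ = B₂ * A * Aᴴ * B₁ᴴ := by conv_lhs => rw [e]
      _ = B₂ * A * (B₁ * A)ᴴ := by rw [mul_assoc (B₂ * A), ← conjTranspose_mul]
      _ = B₂ * A * (B₁ * A) := by rw [d1]
      _ = B₂ * (A * B₁ * A) := by rw [mul_assoc, ← mul_assoc A]
      _ = B₂ * A := by rw [a1]
  calc B₁ = B₁ * A * B₁ := b1.symm
    _ = B₁ * (A * B₂) := by rw [mul_assoc, hAB]
    _ = B₁ * A * B₂ := by rw [← mul_assoc]
    _ = B₂ * A * B₂ := by rw [hBA]
    _ = B₂ := b2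

lemma isMP_sandwich {n : ℕ} (V : Matrix (Fin n) (Fin n) ℂ)
    (hV : V ∈ Matrix.unitaryGroup (Fin n) ℂ) (d : Fin n → ℂ) :
    IsMP (V * diagonal d * Vᴴ) (V * diagonal (fun i => (d i)⁻¹) * Vᴴ) := by
  have hVV : Vᴴ * V = 1 := by
    have := (Matrix.mem_unitaryGroup_iff').mp hV
    simpa [Matrix.star_eq_conjTranspose] using this
  have sand : ∀ f g : Fin n → ℂ, (V * diagonal f * Vᴴ) * (V * diagonal g * Vᴴ)
      = V * diagonal (fun i => f i * g i) * Vᴴ := by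
    intro f g
    have h1 : ∀ X : Matrix (Fin n) (Fin n) ℂ, Vᴴ * (V * X) = X := fun X => by
      rw [← mul_assoc, hVV, one_mul]
    calc (V * diagonal f * Vᴴ) * (V * diagonal g * Vᴴ)
        = V * (diagonal f * (Vᴴ * (V * (diagonal g * Vᴴ)))) := by
          simp only [mul_assoc]
      _ = V * (diagonal f * (diagonal g * Vᴴ)) := by rw [h1]
      _ = V * ((diagonal f * diagonal g) * Vᴴ) := by rw [mul_assoc]
      _ = V * diagonal (fun i => f i * g i) * Vᴴ := by
          rw [diagonal_mul_diagonal, ← mul_assoc]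
  have herm : ∀ f : Fin n → ℂ, (∀ i, star (f i) = f i) →
      (V * diagonal f * Vᴴ)ᴴ = V * diagonal f * Vᴴ := by
    intro f hf
    have hsf : star f = f := funext hf
    rw [conjTranspose_mul, conjTranspose_mul, conjTranspose_conjTranspose,
      diagonal_conjTranspose, hsf, mul_assoc]
  refine ⟨?_, ?_, ?_, ?_⟩
  · rw [sand, sand]
    have : (fun i => (d i * (d i)⁻¹) * d i) = d := by
      funext i
      by_cases h : d i = 0 <;> simp [h, mul_inv_cancel₀]
    rw [this]
  · rw [sand, sand]
    have : (fun i => ((d i)⁻¹ * d i) * (d i)⁻¹) = fun i => (d i)⁻¹ := by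
      funext i
      by_cases h : d i = 0 <;> simp [h, inv_mul_cancel₀]
    rw [this]
  · rw [sand]
    apply herm
    intro i
    by_cases h : d i = 0 <;> simp [h, mul_inv_cancel₀]
  · rw [sand]
    apply herm
    intro i
    by_cases h : d i = 0 <;> simp [h, inv_mul_cancel₀]

lemma l2_diag_le {n : Type*} [Fintype n] [DecidableEq n] (v : n → ℂ) (c : ℝ)
    (hc : 0 ≤ c) (h : ∀ i, ‖v i‖ ≤ c) : ‖Matrix.diagonal v‖ ≤ c := by
  rw [Matrix.l2_opNorm_def]
  refine ContinuousLinearMap.opNorm_le_bound _ hc fun x => ?_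
  have happ : ∀ i, ((Matrix.toEuclideanLin ≪≫ₗ LinearMap.toContinuousLinearMap)
      (Matrix.diagonal v) x : EuclideanSpace ℂ n) i = v i * x i := by
    intro i
    simp [Matrix.toEuclideanLin_apply, Matrix.mulVec_diagonal]
  rw [EuclideanSpace.norm_eq, EuclideanSpace.norm_eq]
  calc Real.sqrt (∑ i, ‖((Matrix.toEuclideanLin ≪≫ₗ LinearMap.toContinuousLinearMap)
        (Matrix.diagonal v) x : EuclideanSpace ℂ n) i‖ ^ 2)
      ≤ Real.sqrt (∑ i, (c * ‖x i‖) ^ 2) := by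
        apply Real.sqrt_le_sqrt
        apply Finset.sum_le_sum
        intro i _
        rw [happ]
        have h1 : ‖v i * x i‖ ≤ c * ‖x i‖ := by
          rw [norm_mul]
          exact mul_le_mul_of_nonneg_right (h i) (norm_nonneg _)
        exact pow_le_pow_left₀ (norm_nonneg _) h1 2
    _ = c * Real.sqrt (∑ i, ‖x i‖ ^ 2) := by
        simp_rw [mul_pow, ← Finset.mul_sum]
        rw [Real.sqrt_mul (sq_nonneg c), Real.sqrt_sq hc]

/-- Corollary 3.4.1.  `A` Hermitian of rank `r ≤ n` with
eigenvalues `lam` (nonzero decreasing then zeros), `E` Hermitian,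
`k = ‖(A^{1/2})⁺ E (A^{1/2})⁺‖₂`.  If the eigenvalue of `A` with smallest nonzero
absolute value has algebraic multiplicity at least `n - r + 1`, then there is an
`i < r` with `λ_i + k|λ_i| ≤ λ_{n-r+i} + ‖E‖₂` and `λ_i - k|λ_i| ≥ λ_i - ‖E‖₂`. -/
theorem stmt15 (n r : ℕ) (hr : r ≤ n)
    (A E V B : Matrix (Fin n) (Fin n) ℂ)
    (lam : Fin n → ℝ)
    (hA : A.IsHermitian) (hE : E.IsHermitian)
    (hV : V ∈ Matrix.unitaryGroup (Fin n) ℂ)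
    (hAeig : A = V * Matrix.diagonal (fun i => (lam i : ℂ)) * Vᴴ)
    (hord : ∀ i j : Fin n, i ≤ j → (j : ℕ) < r → lam j ≤ lam i)
    (hnz : ∀ i : Fin n, (i : ℕ) < r → lam i ≠ 0)
    (hzero : ∀ i : Fin n, r ≤ (i : ℕ) → lam i = 0)
    (hB : IsMP (V * Matrix.diagonal (fun i => (lam i : ℂ) ^ ((1 : ℂ)/2)) * Vᴴ) B)
    (hmult : ∃ j : Fin n, lam j ≠ 0 ∧ (∀ l, lam l ≠ 0 → |lam j| ≤ |lam l|) ∧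
      n - r + 1 ≤ {l : Fin n | lam l = lam j}.ncard) :
    ∃ i : Fin n, ∃ hi : (i : ℕ) < r,
      lam i + specNorm (B * E * B) * |lam i| ≤ lam ⟨n - r + (i : ℕ), by omega⟩ + specNorm E ∧
      lam i - specNorm (B * E * B) * |lam i| ≥ lam i - specNorm E := by
  classical
  obtain ⟨j, hj0, hjmin, hjcard⟩ := hmult
  have hjr : (j : ℕ) < r := by
    by_contra h
    exact hj0 (hzero j (le_of_not_gt h))
  -- combinatorial part
  set S : Set (Fin n) := {l : Fin n | lam l = lam j} with hS
  set T : Finset (Fin n) := S.toFinset with hT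
  have hcardT : S.ncard = T.card := Set.ncard_eq_toFinset_card' S
  have hjT : j ∈ T := by simp [hT, hS]
  have hne : T.Nonempty := ⟨j, hjT⟩
  set a := T.min' hne with ha
  set b := T.max' hne with hb
  have haT : a ∈ T := T.min'_mem hne
  have hbT : b ∈ T := T.max'_mem hne
  have hla : lam a = lam j := by simpa [hT, hS] using haT
  have hlb : lam b = lam j := by simpa [hT, hS] using hbT
  have har : (a : ℕ) < r := by
    by_contra h
    exact hj0 (hla ▸ hzero a (le_of_not_gt h))
  have hbr : (b : ℕ) < r := by
    by_contra h
    exact hj0 (hlb ▸ hzero b (le_of_not_gt h))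
  have hsub : T ⊆ Finset.Icc a b := fun x hx =>
    Finset.mem_Icc.mpr ⟨T.min'_le x hx, T.le_max' x hx⟩
  have hcard2 : T.card ≤ (b : ℕ) + 1 - (a : ℕ) := by
    have := Finset.card_le_card hsub
    simpa [Fin.card_Icc] using this
  have hab : (a : ℕ) ≤ (b : ℕ) := T.min'_le b hbT
  have hjcard' : n - r + 1 ≤ T.card := hcardT ▸ hjcard
  have key : n - r + (a : ℕ) ≤ (b : ℕ) := by omega
  have hm : n - r + (a : ℕ) < n := by omega
  set m : Fin n := ⟨n - r + (a : ℕ), hm⟩ with hmdef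
  have ham : a ≤ m := by
    rw [Fin.le_def]
    simp [hmdef]
  have hmb : m ≤ b := by
    rw [Fin.le_def]
    simpa [hmdef] using key
  have hmr : (m : ℕ) < r := lt_of_le_of_lt hmb hbr
  have hlm : lam m = lam j := by
    have h1 : lam m ≤ lam a := hord a m ham hmr
    have h2 : lam b ≤ lam m := hord m b hmb hbr
    rw [hla] at h1
    rw [hlb] at h2
    linarith
  -- analytic part
  have hd0 : ∀ l : Fin n, lam l = 0 → ((lam l : ℂ) ^ ((1 : ℂ)/2)) = 0 := by
    intro l h
    rw [h]
    push_cast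
    exact Complex.zero_cpow (by norm_num)
  set ν : Fin n → ℂ := fun l => ((lam l : ℂ) ^ ((1 : ℂ)/2))⁻¹ with hν
  have hBeq : B = V * diagonal ν * Vᴴ :=
    mp_unique hB (isMP_sandwich V hV _)
  set c : ℝ := (Real.sqrt |lam j|)⁻¹ with hc
  have hc0 : 0 ≤ c := inv_nonneg.mpr (Real.sqrt_nonneg _)
  have hjpos : 0 < |lam j| := abs_pos.mpr hj0
  have hsjpos : 0 < Real.sqrt |lam j| := Real.sqrt_pos.mpr hjpos
  have hνb : ∀ l, ‖ν l‖ ≤ c := by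
    intro l
    by_cases h : lam l = 0
    · have h0 : ν l = 0 := by
        show ((lam l : ℂ) ^ ((1 : ℂ)/2))⁻¹ = 0
        rw [hd0 l h]; exact inv_zero
      rw [h0, norm_zero]
      exact hc0
    · have habs : ‖(lam l : ℂ) ^ ((1 : ℂ)/2)‖ = Real.sqrt |lam l| := by
        have hz : (lam l : ℂ) ≠ 0 := by exact_mod_cast h
        have h12 : ((1 : ℂ)/2) = ((1/2 : ℝ) : ℂ) := by norm_num
        rw [h12, Complex.norm_cpow_of_ne_zero hz]
        simp [Complex.norm_real, Real.sqrt_eq_rpow]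
      rw [hν]
      simp only [norm_inv, habs]
      rw [hc]
      have hle : Real.sqrt |lam j| ≤ Real.sqrt |lam l| :=
        Real.sqrt_le_sqrt (hjmin l h)
      exact inv_anti₀ hsjpos hle
  have hV1 : ‖V‖ = 1 := by
    haveI : Nonempty (Fin n) := ⟨j⟩
    exact CStarRing.norm_of_mem_unitary hV
  have hVH1 : ‖Vᴴ‖ = 1 := by rw [Matrix.l2_opNorm_conjTranspose, hV1]
  have hdiag : ‖diagonal ν‖ ≤ c := l2_diag_le ν c hc0 hνb
  have hBle : ‖B‖ ≤ c := by
    rw [hBeq]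
    calc ‖V * diagonal ν * Vᴴ‖ ≤ ‖V * diagonal ν‖ * ‖Vᴴ‖ := Matrix.l2_opNorm_mul _ _
      _ ≤ (‖V‖ * ‖diagonal ν‖) * ‖Vᴴ‖ :=
          mul_le_mul_of_nonneg_right (Matrix.l2_opNorm_mul _ _) (norm_nonneg _)
      _ = ‖diagonal ν‖ := by rw [hV1, hVH1, one_mul, mul_one]
      _ ≤ c := hdiag
  have hBEB : ‖B * E * B‖ ≤ c * ‖E‖ * c := by
    calc ‖B * E * B‖ ≤ ‖B * E‖ * ‖B‖ := Matrix.l2_opNorm_mul _ _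
      _ ≤ (‖B‖ * ‖E‖) * ‖B‖ :=
          mul_le_mul_of_nonneg_right (Matrix.l2_opNorm_mul _ _) (norm_nonneg _)
      _ ≤ (c * ‖E‖) * c := by
          apply mul_le_mul _ hBle (norm_nonneg _) (by positivity)
          exact mul_le_mul_of_nonneg_right hBle (norm_nonneg _)
  have hcc : c * c * |lam j| = 1 := by
    rw [hc, ← mul_inv]
    rw [Real.mul_self_sqrt (abs_nonneg _)]
    exact inv_mul_cancel₀ (ne_of_gt hjpos)
  have hKE : specNorm (B * E * B) * |lam j| ≤ specNorm E := by
    rw [specNorm_eq_l2, specNorm_eq_l2]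
    calc ‖B * E * B‖ * |lam j| ≤ (c * ‖E‖ * c) * |lam j| :=
          mul_le_mul_of_nonneg_right hBEB (abs_nonneg _)
      _ = ‖E‖ * (c * c * |lam j|) := by ring
      _ = ‖E‖ := by rw [hcc, mul_one]
  have hE0 : 0 ≤ specNorm E := by rw [specNorm_eq_l2]; exact norm_nonneg _
  refine ⟨a, har, ?_, ?_⟩
  · have : lam (⟨n - r + (a : ℕ), by omega⟩ : Fin n) = lam j := hlm
    rw [this, hla]
    linarith
  · rw [ge_iff_le, sub_le_sub_iff_left, hla]
    linarith [hKE]
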